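/- For nonnegative integers j, k and a single CCR pair (a, a⁺), the element M^k (M⁺)^j (I) of the Weyl algebra equals B^j_k(a, a⁺) = Σ_{s=0}^{k} (k choose s) q^{k-s} (1-q)^s a^s (a⁺)^j a^{k-s}. -/

import Mathlib

/-- For nonnegative integers `j, k` and a single CCR pair `(a, a⁺)`, the
element `M^k (M⁺)^j (I)` of the Weyl algebra equals
`B^j_k(a, a⁺) = Σ_{s=0}^{k} (k choose s) q^{k-s} (1-q)^s a^s (a⁺)^j a^{k-s}`,
where `M = (1-q)L_a + q R_a` and `M⁺ = q L_{a⁺} + (1-q) R_{a⁺}`. -/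
theorem stmt5 {W : Type*} [Ring W] [Algebra ℂ W] (a ap : W)
    (hccr : a * ap - ap * a = 1)
    (q : ℝ) (hq : q ∈ Set.Icc (0 : ℝ) 1)
    (M Mp : Module.End ℂ W)
    (hM : ∀ w, M w = ((1 - q : ℝ) : ℂ) • (a * w) + (q : ℂ) • (w * a))
    (hMp : ∀ w, Mp w = (q : ℂ) • (ap * w) + ((1 - q : ℝ) : ℂ) • (w * ap)) :
    ∀ j k : ℕ,
      (M ^ k * Mp ^ j) 1 =
        ∑ s ∈ Finset.range (k + 1),
          ((k.choose s : ℂ) * (q : ℂ) ^ (k - s) * ((1 - q : ℝ) : ℂ) ^ s) •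
            (a ^ s * ap ^ j * a ^ (k - s)) := by
  intro j k
  -- First: Mp ^ j applied to 1 is ap ^ j.
  have hMpj : (Mp ^ j) 1 = ap ^ j := by
    induction j with
    | zero => simp
    | succ n ih =>
      rw [pow_succ', Module.End.mul_apply, ih, hMp]
      push_cast
      rw [← pow_succ', ← pow_succ]
      ring_nf
      rw [← add_smul]
      ring_nf
      simp
  -- Express M as a combination of left/right multiplication operators.
  set r : ℂ := ((1 - q : ℝ) : ℂ) with hr
  set p : ℂ := (q : ℂ) with hp
  have hMeq : M = r • LinearMap.mulLeft ℂ a + p • LinearMap.mulRight ℂ a := by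
    ext w
    simp [hM w, LinearMap.mulLeft_apply, LinearMap.mulRight_apply]
  have hcomm : Commute (r • LinearMap.mulLeft ℂ a) (p • LinearMap.mulRight ℂ a) :=
    ((LinearMap.commute_mulLeft_right a a).smul_left r).smul_right p
  have hpow : M ^ k = ∑ s ∈ Finset.range (k + 1),
      (r • LinearMap.mulLeft ℂ a) ^ s * (p • LinearMap.mulRight ℂ a) ^ (k - s)
        * (k.choose s : Module.End ℂ W) := by
    rw [hMeq, hcomm.add_pow]
  rw [Module.End.mul_apply, hMpj, hpow]
  rw [LinearMap.sum_apply]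
  refine Finset.sum_congr rfl fun s hs => ?_
  rw [smul_pow, smul_pow, LinearMap.pow_mulLeft, LinearMap.pow_mulRight]
  simp only [Module.End.mul_apply, Module.End.natCast_apply, LinearMap.smul_apply,
    LinearMap.mulLeft_apply, LinearMap.mulRight_apply, ← Nat.cast_smul_eq_nsmul ℂ]
  simp only [Algebra.mul_smul_comm, Algebra.smul_mul_assoc, smul_smul, mul_assoc]
  ring_nf
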